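/- Let r : X → (0,∞) be measurable with 0 < a ≤ r(x) ≤ b < ∞ for all x, let β ≥ 0, and let (ν_K)_{K≥1} be nonnegative reals with ν_K/K → β as K → ∞ (with ν_K > 0 for all K if β > 0). Then lim_{K→∞} ( −L_{K;ν_K}(r) + (K·log K)/(K+ν_K) ) = (β/(β+1))·log β + (1/(β+1))·∫ log r dq1 − log( β + ∫ r dq0 ), where (β/(β+1))·log β is interpreted as 0 when β = 0. -/

import Mathlib

open MeasureTheory Filter
open scoped ENNReal

/-- The class measure on `X^K` under which the `z`-th coordinate has law `q1` and the
remaining coordinates are i.i.d. with law `q0`, all independent. -/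
noncomputable def classMeasure {X : Type*} [MeasurableSpace X]
    (q1 q0 : Measure X) (K : ℕ) (z : Fin K) : Measure (Fin K → X) :=
  Measure.pi fun i => if i = z then q1 else q0

/-- The (real-valued) InfoNCE-anchor objective
`L_{K;ν}(r) = −(K/(K+ν)) E_{q1 ⊗ q0^{K−1}}[log(r(x_1)/(ν + ∑_i r(x_i)))]
            − (ν/(K+ν)) E_{q0^{⊗K}}[log(ν/(ν + ∑_i r(x_i)))]`
(the second term vanishes when `ν = 0`; the value for `K = 0` is irrelevant). -/
noncomputable def anchorLossR {X : Type*} [MeasurableSpace X]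
    (q1 q0 : Measure X) (K : ℕ) (ν : ℝ) (r : X → ℝ) : ℝ :=
  if hK : 0 < K then
    -(((K : ℝ) / ((K : ℝ) + ν)) *
      ∫ x : Fin K → X, Real.log (r (x ⟨0, hK⟩) / (ν + ∑ i, r (x i)))
        ∂(classMeasure q1 q0 K ⟨0, hK⟩))
    - ((ν / ((K : ℝ) + ν)) *
      ∫ x : Fin K → X, Real.log (ν / (ν + ∑ i, r (x i)))
        ∂(Measure.pi fun _ : Fin K => q0))
  else 0

lemma my_abs_interval {lo hi y : ℝ} (h1 : lo ≤ y) (h2 : y ≤ hi) : |y| ≤ |lo| + |hi| :=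
  abs_le.mpr ⟨by linarith [neg_abs_le lo, abs_nonneg hi], by linarith [le_abs_self hi, abs_nonneg lo]⟩

lemma my_log_lip {a u v : ℝ} (ha : 0 < a) (hu : a ≤ u) (hv : a ≤ v) :
    |Real.log u - Real.log v| ≤ |u - v| / a := by
  wlog h : v ≤ u generalizing u v
  · rw [abs_sub_comm, abs_sub_comm u v]; exact this hv hu (le_of_not_ge h)
  have hv0 : 0 < v := lt_of_lt_of_le ha hv
  have hu0 : 0 < u := lt_of_lt_of_le ha hu
  have hlog : Real.log v ≤ Real.log u := Real.log_le_log hv0 h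
  rw [abs_of_nonneg (sub_nonneg.mpr hlog), abs_of_nonneg (by linarith)]
  rw [← Real.log_div hu0.ne' hv0.ne']
  have h1 : Real.log (u / v) ≤ u / v - 1 := Real.log_le_sub_one_of_pos (by positivity)
  have h2 : u / v - 1 = (u - v) / v := by field_simp
  have h3 : (u - v) / v ≤ (u - v) / a :=
    div_le_div_of_nonneg_left (by linarith) ha hv
  linarith

section Aux
variable {X : Type*} [MeasurableSpace X]

lemma my_abs_le_eps {y ε : ℝ} (hε : 0 < ε) : |y| ≤ ε + y ^ 2 / ε := by
  have h : |y| * ε ≤ ε * ε + y ^ 2 := by nlinarith [sq_nonneg (|y| - ε), sq_abs y]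
  calc |y| = |y| * ε / ε := by field_simp
    _ ≤ (ε * ε + y ^ 2) / ε := (div_le_div_iff_of_pos_right hε).mpr h
    _ = ε + y ^ 2 / ε := by field_simp

lemma my_integral_pi_prod {K : ℕ} (μ : Fin K → Measure X)
    (hσ : ∀ i, SigmaFinite (μ i)) (f : Fin K → X → ℝ) :
    ∫ x : Fin K → X, ∏ i, f i (x i) ∂(Measure.pi μ) = ∏ i, ∫ x, f i x ∂(μ i) :=
  @MeasureTheory.integral_fin_nat_prod_eq_prod ℝ _ K (fun _ => X)
    (fun _ => inferInstance) μ (fun i => show SigmaFinite (μ i) from hσ i) f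

lemma my_integrable_of_bound (μ : Measure X) [IsFiniteMeasure μ] {f : X → ℝ}
    (hf : Measurable f) (C : ℝ) (h : ∀ x, |f x| ≤ C) : Integrable f μ :=
  Integrable.mono' (integrable_const C) hf.aestronglyMeasurable
    (Filter.Eventually.of_forall fun x => by simpa using h x)

lemma my_marginal {K : ℕ} (μ : Fin K → Measure X) (hP : ∀ i, IsProbabilityMeasure (μ i))
    (i₀ : Fin K) (g : X → ℝ) :
    ∫ x : Fin K → X, g (x i₀) ∂(Measure.pi μ) = ∫ x, g x ∂(μ i₀) := by
  have := my_integral_pi_prod μ (fun i => haveI := hP i; inferInstance)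
    (fun i x => if i = i₀ then g x else 1)
  simp only [Finset.prod_ite_eq', Finset.mem_univ, if_true] at this
  rw [this, Finset.prod_eq_single i₀]
  · simp
  · intro j _ hj
    haveI := hP j
    simp [hj]
  · simp

lemma my_pair {K : ℕ} (μ : Fin K → Measure X) (hP : ∀ i, IsProbabilityMeasure (μ i))
    {i₀ j₀ : Fin K} (hij : i₀ ≠ j₀) (g h : X → ℝ) :
    ∫ x : Fin K → X, g (x i₀) * h (x j₀) ∂(Measure.pi μ)
      = (∫ x, g x ∂(μ i₀)) * ∫ x, h x ∂(μ j₀) := by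
  have key := my_integral_pi_prod μ (fun i => haveI := hP i; inferInstance)
    (fun i x => (if i = i₀ then g x else 1) * (if i = j₀ then h x else 1))
  have lhs : ∀ x : Fin K → X,
      (∏ i, (if i = i₀ then g (x i) else 1) * (if i = j₀ then h (x i) else 1))
        = g (x i₀) * h (x j₀) := by
    intro x
    rw [Finset.prod_mul_distrib]
    simp [Finset.prod_ite_eq']
  rw [show (∫ x : Fin K → X, ∏ i,
      (if i = i₀ then g (x i) else 1) * (if i = j₀ then h (x i) else 1) ∂(Measure.pi μ))
      = ∫ x : Fin K → X, g (x i₀) * h (x j₀) ∂(Measure.pi μ) from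
    integral_congr_ae (Filter.Eventually.of_forall fun x => lhs x)] at key
  rw [key]
  have rhs : ∀ i : Fin K, (∫ x, (if i = i₀ then g x else 1) * (if i = j₀ then h x else 1) ∂(μ i))
      = (if i = i₀ then ∫ x, g x ∂(μ i) else 1) * (if i = j₀ then ∫ x, h x ∂(μ i) else 1) := by
    intro i
    haveI := hP i
    by_cases h1 : i = i₀
    · have h2 : i ≠ j₀ := h1 ▸ hij
      simp [h1, h2, hij]
    · by_cases h2 : i = j₀
      · simp [h1, h2, Ne.symm hij]
      · simp [h1, h2]
  rw [Finset.prod_congr rfl (fun i _ => rhs i), Finset.prod_mul_distrib]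
  simp [Finset.prod_ite_eq']

variable {a b : ℝ} {r : X → ℝ}

lemma my_mean_lb (μ : Measure X) [IsProbabilityMeasure μ] (ha : 0 < a)
    (hr : Measurable r) (hlb : ∀ x, a ≤ r x) (hub : ∀ x, r x ≤ b) :
    a ≤ ∫ y, r y ∂μ ∧ (∫ y, r y ∂μ) ≤ b := by
  have hint : Integrable r μ := my_integrable_of_bound μ hr (|a| + |b|)
    (fun x => my_abs_interval (hlb x) (hub x))
  constructor
  · calc a = ∫ _, a ∂μ := by simp
      _ ≤ ∫ y, r y ∂μ := integral_mono (integrable_const a) hint hlb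
  · calc (∫ y, r y ∂μ) ≤ ∫ _, b ∂μ := integral_mono hint (integrable_const b) hub
      _ = b := by simp

lemma my_var {K : ℕ} (μ : Fin K → Measure X) (hP : ∀ i, IsProbabilityMeasure (μ i))
    (ha : 0 < a) (hr : Measurable r) (hlb : ∀ x, a ≤ r x) (hub : ∀ x, r x ≤ b) :
    ∫ x : Fin K → X, (∑ i, (r (x i) - ∫ y, r y ∂(μ i))) ^ 2 ∂(Measure.pi μ)
      ≤ K * (b - a) ^ 2 := by
  haveI : ∀ i, IsProbabilityMeasure (μ i) := hP
  haveI : IsProbabilityMeasure (Measure.pi μ) := inferInstance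
  set m : Fin K → ℝ := fun i => ∫ y, r y ∂(μ i) with hm_def
  have hm : ∀ i, a ≤ m i ∧ m i ≤ b := fun i => my_mean_lb (μ i) ha hr hlb hub
  have hrint : ∀ i, Integrable r (μ i) := fun i => my_integrable_of_bound (μ i) hr (|a| + |b|)
    (fun x => my_abs_interval (hlb x) (hub x))
  have hg : ∀ (i : Fin K) (x : X), |r x - m i| ≤ b - a := fun i x =>
    abs_le.mpr ⟨by linarith [hlb x, (hm i).2], by linarith [hub x, (hm i).1]⟩
  have hgmean : ∀ i, ∫ y, (r y - m i) ∂(μ i) = 0 := by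
    intro i
    rw [integral_sub (hrint i) (integrable_const _)]
    simp [hm_def]
  have hmeas : ∀ i : Fin K, Measurable (fun x : Fin K → X => r (x i) - m i) :=
    fun i => (hr.comp (measurable_pi_apply i)).sub measurable_const
  have hint_pair : ∀ i j : Fin K,
      Integrable (fun x : Fin K → X => (r (x i) - m i) * (r (x j) - m j)) (Measure.pi μ) := by
    intro i j
    refine my_integrable_of_bound _ ((hmeas i).mul (hmeas j)) ((b - a) * (b - a)) ?_
    intro x
    rw [abs_mul]
    exact mul_le_mul (hg i (x i)) (hg j (x j)) (abs_nonneg _) (by linarith [hg i (x i), abs_nonneg (r (x i) - m i)])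
  have expand : ∀ x : Fin K → X,
      (∑ i, (r (x i) - m i)) ^ 2 = ∑ i, ∑ j, (r (x i) - m i) * (r (x j) - m j) := by
    intro x
    rw [pow_two, Finset.sum_mul_sum]
  rw [integral_congr_ae (Filter.Eventually.of_forall expand)]
  rw [integral_finset_sum _ (fun i _ => integrable_finset_sum _ (fun j _ => hint_pair i j))]
  have step : ∀ i : Fin K,
      (∫ x : Fin K → X, ∑ j, (r (x i) - m i) * (r (x j) - m j) ∂(Measure.pi μ))
        ≤ (b - a) ^ 2 := by
    intro i
    rw [integral_finset_sum _ (fun j _ => hint_pair i j)]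
    have offdiag : ∀ j : Fin K, j ≠ i →
        (∫ x : Fin K → X, (r (x i) - m i) * (r (x j) - m j) ∂(Measure.pi μ)) = 0 := by
      intro j hj
      rw [my_pair μ hP (Ne.symm hj) (fun y => r y - m i) (fun y => r y - m j),
        hgmean i, zero_mul]
    rw [Finset.sum_eq_single i (fun j _ hj => offdiag j hj) (by simp)]
    have diag : (∫ x : Fin K → X, (r (x i) - m i) * (r (x i) - m i) ∂(Measure.pi μ))
        = ∫ y, (r y - m i) * (r y - m i) ∂(μ i) :=
      my_marginal μ hP i (fun y => (r y - m i) * (r y - m i))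
    rw [diag]
    calc (∫ y, (r y - m i) * (r y - m i) ∂(μ i)) ≤ ∫ _, (b - a) ^ 2 ∂(μ i) := by
          refine integral_mono ?_ (integrable_const _) ?_
          · exact my_integrable_of_bound _ ((hr.sub measurable_const).mul (hr.sub measurable_const))
              ((b - a) * (b - a)) (fun x => by
                rw [abs_mul]
                exact mul_le_mul (hg i x) (hg i x) (abs_nonneg _) (by linarith [hg i x, abs_nonneg (r x - m i)]))
          · intro y
            show (r y - m i) * (r y - m i) ≤ (b - a) ^ 2
            have := hg i y
            nlinarith [abs_nonneg (r y - m i), abs_mul_abs_self (r y - m i)]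
      _ = (b - a) ^ 2 := by simp
  calc (∑ i : Fin K, ∫ x : Fin K → X, ∑ j, (r (x i) - m i) * (r (x j) - m j) ∂(Measure.pi μ))
      ≤ ∑ _i : Fin K, (b - a) ^ 2 := Finset.sum_le_sum (fun i _ => step i)
    _ = K * (b - a) ^ 2 := by simp [Finset.sum_const, mul_comm]


lemma my_core {K : ℕ} (hK : 0 < K) (μ : Fin K → Measure X)
    (hP : ∀ i, IsProbabilityMeasure (μ i))
    (ha : 0 < a) (hab : a ≤ b) (hr : Measurable r)
    (hlb : ∀ x, a ≤ r x) (hub : ∀ x, r x ≤ b) (ν : ℝ) (hν : 0 ≤ ν) :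
    |(∫ x : Fin K → X, Real.log ((ν + ∑ i, r (x i)) / K) ∂(Measure.pi μ))
      - Real.log ((ν + ∑ i, ∫ y, r y ∂(μ i)) / K)|
      ≤ 2 * (b - a + 1) / (a * Real.sqrt K) := by
  haveI : ∀ i, IsProbabilityMeasure (μ i) := hP
  haveI : IsProbabilityMeasure (Measure.pi μ) := inferInstance
  have hK0 : (0:ℝ) < K := by exact_mod_cast hK
  set m : Fin K → ℝ := fun i => ∫ y, r y ∂(μ i) with hm_def
  have hm : ∀ i, a ≤ m i ∧ m i ≤ b := fun i => my_mean_lb (μ i) ha hr hlb hub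
  set S : (Fin K → X) → ℝ := fun x => ∑ i, r (x i) with hS_def
  set M : ℝ := ∑ i, m i with hM_def
  have hS_meas : Measurable S := Finset.measurable_sum _ (fun i _ => hr.comp (measurable_pi_apply i))
  have hSlb : ∀ x, (K:ℝ) * a ≤ S x := by
    intro x
    calc (K:ℝ) * a = ∑ _i : Fin K, a := by simp [mul_comm]
      _ ≤ S x := Finset.sum_le_sum (fun i _ => hlb (x i))
  have hSub : ∀ x, S x ≤ (K:ℝ) * b := by
    intro x
    calc S x ≤ ∑ _i : Fin K, b := Finset.sum_le_sum (fun i _ => hub (x i))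
      _ = (K:ℝ) * b := by simp [mul_comm]
  have hMlb : (K:ℝ) * a ≤ M := by
    calc (K:ℝ) * a = ∑ _i : Fin K, a := by simp [mul_comm]
      _ ≤ M := Finset.sum_le_sum (fun i _ => (hm i).1)
  have hMub : M ≤ (K:ℝ) * b := by
    calc M ≤ ∑ _i : Fin K, b := Finset.sum_le_sum (fun i _ => (hm i).2)
      _ = (K:ℝ) * b := by simp [mul_comm]
  have hTa : ∀ x, a ≤ (ν + S x) / K := by
    intro x
    rw [le_div_iff₀ hK0]
    nlinarith [hSlb x]
  have hMa : a ≤ (ν + M) / K := by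
    rw [le_div_iff₀ hK0]
    nlinarith
  have hTub : ∀ x, (ν + S x) / K ≤ (ν + (K:ℝ) * b) / K := by
    intro x
    gcongr
    exact hSub x
  -- pointwise Lipschitz bound
  have hlip : ∀ x, |Real.log ((ν + S x) / K) - Real.log ((ν + M) / K)|
      ≤ |S x - M| / ((K:ℝ) * a) := by
    intro x
    have := my_log_lip ha (hTa x) hMa
    have heq : (ν + S x) / K - (ν + M) / K = (S x - M) / K := by ring
    rw [heq, abs_div, abs_of_pos hK0] at this
    calc |Real.log ((ν + S x) / K) - Real.log ((ν + M) / K)| ≤ |S x - M| / K / a := this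
      _ = |S x - M| / ((K:ℝ) * a) := by rw [div_div]
  -- integrability of log term
  have hf_meas : Measurable (fun x : Fin K → X => Real.log ((ν + S x) / K)) :=
    Real.measurable_log.comp ((measurable_const.add hS_meas).div_const _)
  have hf_bdd : ∀ x, |Real.log ((ν + S x) / K)|
      ≤ |Real.log a| + |Real.log ((ν + (K:ℝ) * b) / K)| := by
    intro x
    refine my_abs_interval ?_ ?_
    · exact Real.log_le_log (by linarith) (hTa x)
    · exact Real.log_le_log (lt_of_lt_of_le ha (hTa x)) (hTub x)
  have hf_int : Integrable (fun x : Fin K → X => Real.log ((ν + S x) / K)) (Measure.pi μ) :=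
    my_integrable_of_bound _ hf_meas _ hf_bdd
  -- |S - M| integrable and bounded
  have hSM_meas : Measurable (fun x : Fin K → X => S x - M) := hS_meas.sub measurable_const
  have hSM_bdd : ∀ x, |S x - M| ≤ (K:ℝ) * (b - a) := by
    intro x
    rw [abs_le]
    constructor <;> nlinarith [hSlb x, hSub x]
  have hSM_int : Integrable (fun x : Fin K → X => |S x - M|) (Measure.pi μ) :=
    my_integrable_of_bound _ hSM_meas.abs ((K:ℝ) * (b - a))
      (fun x => by rw [abs_abs]; exact hSM_bdd x)
  -- step 1 : |∫ f - c| ≤ ∫ |S - M| / (K a)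
  have step1 : |(∫ x : Fin K → X, Real.log ((ν + S x) / K) ∂(Measure.pi μ))
      - Real.log ((ν + M) / K)|
      ≤ (∫ x : Fin K → X, |S x - M| ∂(Measure.pi μ)) / ((K:ℝ) * a) := by
    have h1 : (∫ x : Fin K → X, Real.log ((ν + S x) / K) ∂(Measure.pi μ))
        - Real.log ((ν + M) / K)
        = ∫ x : Fin K → X, (Real.log ((ν + S x) / K) - Real.log ((ν + M) / K)) ∂(Measure.pi μ) := by
      rw [integral_sub hf_int (integrable_const _), integral_const]
      simp
    rw [h1]
    calc |∫ x : Fin K → X, (Real.log ((ν + S x) / K) - Real.log ((ν + M) / K)) ∂(Measure.pi μ)|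
        ≤ ∫ x : Fin K → X, |Real.log ((ν + S x) / K) - Real.log ((ν + M) / K)| ∂(Measure.pi μ) :=
          by simpa [Real.norm_eq_abs] using
            norm_integral_le_integral_norm
              (f := fun x : Fin K → X => Real.log ((ν + S x) / K) - Real.log ((ν + M) / K))
      _ ≤ ∫ x : Fin K → X, |S x - M| / ((K:ℝ) * a) ∂(Measure.pi μ) := by
          refine integral_mono ?_ (hSM_int.div_const _) hlip
          exact my_integrable_of_bound _ (hf_meas.sub measurable_const).abs
            (|Real.log a| + |Real.log ((ν + (K:ℝ) * b) / K)| + |Real.log ((ν + M) / K)|)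
            (fun x => by
              rw [abs_abs]
              calc |Real.log ((ν + S x) / K) - Real.log ((ν + M) / K)|
                  ≤ |Real.log ((ν + S x) / K)| + |Real.log ((ν + M) / K)| := abs_sub _ _
                _ ≤ _ := by linarith [hf_bdd x])
      _ = (∫ x : Fin K → X, |S x - M| ∂(Measure.pi μ)) / ((K:ℝ) * a) := integral_div _ _
  -- step 2 : ∫ |S - M| ≤ 2 (b-a+1) sqrt K
  have hsqK : Real.sqrt K * Real.sqrt K = (K:ℝ) := Real.mul_self_sqrt (le_of_lt hK0)
  have hsqK_pos : 0 < Real.sqrt K := Real.sqrt_pos.mpr hK0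
  set ε : ℝ := (b - a + 1) * Real.sqrt K with hε_def
  have hε_pos : 0 < ε := mul_pos (by linarith) hsqK_pos
  have step2 : (∫ x : Fin K → X, |S x - M| ∂(Measure.pi μ)) ≤ 2 * (b - a + 1) * Real.sqrt K := by
    have pw : ∀ x, |S x - M| ≤ ε + (S x - M) ^ 2 / ε := fun x => my_abs_le_eps hε_pos
    have hsq_int : Integrable (fun x : Fin K → X => (S x - M) ^ 2) (Measure.pi μ) :=
      my_integrable_of_bound _ (hSM_meas.pow_const 2) (((K:ℝ) * (b - a)) ^ 2)
        (fun x => by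
          rw [abs_of_nonneg (sq_nonneg _), ← sq_abs]
          exact pow_le_pow_left₀ (abs_nonneg _) (hSM_bdd x) 2)
    have hvar : (∫ x : Fin K → X, (S x - M) ^ 2 ∂(Measure.pi μ)) ≤ K * (b - a) ^ 2 := by
      have heq : (fun x : Fin K → X => (S x - M) ^ 2)
          = fun x : Fin K → X => (∑ i, (r (x i) - m i)) ^ 2 := by
        funext x
        rw [hS_def, hM_def, ← Finset.sum_sub_distrib]
      rw [heq]
      exact my_var μ hP ha hr hlb hub
    calc (∫ x : Fin K → X, |S x - M| ∂(Measure.pi μ))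
        ≤ ∫ x : Fin K → X, (ε + (S x - M) ^ 2 / ε) ∂(Measure.pi μ) :=
          integral_mono hSM_int ((integrable_const ε).add (hsq_int.div_const ε)) pw
      _ = ε + (∫ x : Fin K → X, (S x - M) ^ 2 ∂(Measure.pi μ)) / ε := by
          rw [integral_add (integrable_const ε) (hsq_int.div_const ε), integral_const,
            integral_div]
          simp
      _ ≤ ε + ((K:ℝ) * (b - a) ^ 2) / ε := by gcongr
      _ ≤ 2 * (b - a + 1) * Real.sqrt K := by
          have h1 : (K:ℝ) * (b - a) ^ 2 / ε ≤ (b - a + 1) * Real.sqrt K := by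
            rw [div_le_iff₀ hε_pos, hε_def]
            nlinarith [hsqK, hK0.le, sub_nonneg.mpr hab,
              mul_nonneg hK0.le (sub_nonneg.mpr hab), hsqK_pos.le]
          rw [hε_def] at *
          linarith
  -- conclusion
  have heq2 : 2 * (b - a + 1) * Real.sqrt K / ((K:ℝ) * a) = 2 * (b - a + 1) / (a * Real.sqrt K) := by
    rw [div_eq_div_iff (by positivity) (by positivity)]
    linear_combination (2 * (b - a + 1) * a) * hsqK
  show |(∫ x : Fin K → X, Real.log ((ν + S x) / K) ∂(Measure.pi μ))
      - Real.log ((ν + M) / K)| ≤ 2 * (b - a + 1) / (a * Real.sqrt K)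
  calc |(∫ x : Fin K → X, Real.log ((ν + S x) / K) ∂(Measure.pi μ)) - Real.log ((ν + M) / K)|
      ≤ (∫ x : Fin K → X, |S x - M| ∂(Measure.pi μ)) / ((K:ℝ) * a) := step1
    _ ≤ 2 * (b - a + 1) * Real.sqrt K / ((K:ℝ) * a) := by gcongr
    _ = 2 * (b - a + 1) / (a * Real.sqrt K) := heq2


end Aux
section Identity
variable {X : Type*} [MeasurableSpace X]

lemma my_identity (q1 q0 : Measure X)
    [IsProbabilityMeasure q1] [IsProbabilityMeasure q0]
    {a b : ℝ} (ha : 0 < a) {r : X → ℝ} (hr : Measurable r)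
    (hlb : ∀ x, a ≤ r x) (hub : ∀ x, r x ≤ b)
    {K : ℕ} (hK : 0 < K) (ν : ℝ) (hν : 0 ≤ ν) :
    - anchorLossR q1 q0 K ν r + ((K : ℝ) * Real.log K) / ((K : ℝ) + ν)
    = (1 + ν / K)⁻¹ * (∫ x, Real.log (r x) ∂q1)
      + (ν / K * Real.log (ν / K)) / (1 + ν / K)
      - (1 + ν / K)⁻¹ *
        (∫ x : Fin K → X, Real.log ((ν + ∑ i, r (x i)) / K) ∂(classMeasure q1 q0 K ⟨0, hK⟩))
      - ((ν / K) / (1 + ν / K)) *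
        (∫ x : Fin K → X, Real.log ((ν + ∑ i, r (x i)) / K)
          ∂(Measure.pi fun _ : Fin K => q0)) := by
  have hK0 : (0:ℝ) < K := by exact_mod_cast hK
  have hKν : (0:ℝ) < K + ν := by linarith
  set z : Fin K := ⟨0, hK⟩ with hz_def
  have hP1 : ∀ i : Fin K, IsProbabilityMeasure (if i = z then q1 else q0) := by
    intro i
    split <;> infer_instance
  haveI : ∀ i : Fin K, IsProbabilityMeasure ((fun i => if i = z then q1 else q0) i) := hP1
  haveI hPM1 : IsProbabilityMeasure (classMeasure q1 q0 K z) := by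
    rw [classMeasure]; infer_instance
  haveI hPM0 : IsProbabilityMeasure (Measure.pi fun _ : Fin K => q0) := inferInstance
  set S : (Fin K → X) → ℝ := fun x => ∑ i, r (x i) with hS_def
  have hS_meas : Measurable S :=
    Finset.measurable_sum _ (fun i _ => hr.comp (measurable_pi_apply i))
  have hSlb : ∀ x, (K:ℝ) * a ≤ S x := by
    intro x
    calc (K:ℝ) * a = ∑ _i : Fin K, a := by simp [mul_comm]
      _ ≤ S x := Finset.sum_le_sum (fun i _ => hlb (x i))
  have hSub : ∀ x, S x ≤ (K:ℝ) * b := by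
    intro x
    calc S x ≤ ∑ _i : Fin K, b := Finset.sum_le_sum (fun i _ => hub (x i))
      _ = (K:ℝ) * b := by simp [mul_comm]
  have hS_pos : ∀ x, 0 < ν + S x := by
    intro x
    nlinarith [hSlb x]
  -- measurability / integrability of the two integrands
  have hf2_meas : Measurable (fun x : Fin K → X => Real.log ((ν + S x) / K)) :=
    Real.measurable_log.comp ((measurable_const.add hS_meas).div_const _)
  have hf2_bdd : ∀ x, |Real.log ((ν + S x) / K)|
      ≤ |Real.log a| + |Real.log ((ν + (K:ℝ) * b) / K)| := by
    intro x
    refine my_abs_interval ?_ ?_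
    · refine Real.log_le_log ha ?_
      rw [le_div_iff₀ hK0]
      nlinarith [hSlb x]
    · refine Real.log_le_log (div_pos (hS_pos x) hK0) ?_
      gcongr
      exact hSub x
  have hf2_int : ∀ (μ : Measure (Fin K → X)) [IsProbabilityMeasure μ],
      Integrable (fun x : Fin K → X => Real.log ((ν + S x) / K)) μ := fun μ _ =>
    my_integrable_of_bound _ hf2_meas _ hf2_bdd
  have hf1_meas : Measurable (fun x : Fin K → X => Real.log (r (x z))) :=
    (Real.measurable_log.comp hr).comp (measurable_pi_apply z)
  have hf1_bdd : ∀ x : Fin K → X, |Real.log (r (x z))| ≤ |Real.log a| + |Real.log b| :=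
    fun x => my_abs_interval (Real.log_le_log ha (hlb _))
      (Real.log_le_log (lt_of_lt_of_le ha (hlb _)) (hub _))
  have hf1_int : Integrable (fun x : Fin K → X => Real.log (r (x z)))
      (classMeasure q1 q0 K z) := my_integrable_of_bound _ hf1_meas _ hf1_bdd
  -- the marginal of log r under the class measure
  have hmarg : (∫ x : Fin K → X, Real.log (r (x z)) ∂(classMeasure q1 q0 K z))
      = ∫ y, Real.log (r y) ∂q1 := by
    rw [classMeasure, my_marginal _ hP1 z (fun y => Real.log (r y))]
    simp
  -- rewrite the first integral
  have e1 : ∀ x : Fin K → X, Real.log (r (x z) / (ν + S x))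
      = Real.log (r (x z)) - Real.log ((ν + S x) / K) - Real.log K := by
    intro x
    rw [Real.log_div (ne_of_gt (lt_of_lt_of_le ha (hlb _))) (ne_of_gt (hS_pos x)),
      Real.log_div (ne_of_gt (hS_pos x)) (ne_of_gt hK0)]
    ring
  have hI1 : (∫ x : Fin K → X, Real.log (r (x z) / (ν + S x)) ∂(classMeasure q1 q0 K z))
      = (∫ y, Real.log (r y) ∂q1)
        - (∫ x : Fin K → X, Real.log ((ν + S x) / K) ∂(classMeasure q1 q0 K z))
        - Real.log K := by
    rw [integral_congr_ae (Filter.Eventually.of_forall e1),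
      integral_sub (f := fun x : Fin K → X => Real.log (r (x z)) - Real.log ((ν + S x) / K))
        (g := fun _ => Real.log K) (hf1_int.sub (hf2_int _)) (integrable_const _),
      integral_sub (f := fun x : Fin K → X => Real.log (r (x z)))
        (g := fun x : Fin K → X => Real.log ((ν + S x) / K)) hf1_int (hf2_int _),
      integral_const, hmarg]
    simp
  -- unfold the loss
  rw [anchorLossR, dif_pos hK]
  rw [show (⟨0, hK⟩ : Fin K) = z from rfl]
  rw [hI1]
  by_cases hν0 : ν = 0
  · subst hν0
    simp only [zero_div, zero_mul, Real.log_zero, mul_zero, add_zero, sub_zero, zero_sub,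
      zero_add, inv_one, one_mul, neg_neg]
    field_simp
    exact sub_add_cancel _ _
  · have hνpos : 0 < ν := lt_of_le_of_ne hν (Ne.symm hν0)
    have e0 : ∀ x : Fin K → X, Real.log (ν / (ν + S x))
        = Real.log (ν / K) - Real.log ((ν + S x) / K) := by
      intro x
      rw [Real.log_div hν0 (ne_of_gt (hS_pos x)), Real.log_div hν0 (ne_of_gt hK0),
        Real.log_div (ne_of_gt (hS_pos x)) (ne_of_gt hK0)]
      ring
    have hI0 : (∫ x : Fin K → X, Real.log (ν / (ν + S x)) ∂(Measure.pi fun _ : Fin K => q0))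
        = Real.log (ν / K)
          - (∫ x : Fin K → X, Real.log ((ν + S x) / K) ∂(Measure.pi fun _ : Fin K => q0)) := by
      rw [integral_congr_ae (Filter.Eventually.of_forall e0),
        integral_sub (integrable_const _) (hf2_int _), integral_const]
      simp
    rw [hI0]
    field_simp
    ring

end Identity

/-- asymptotic behavior of InfoNCE-anchor. If `ν_K / K → β ≥ 0`, then
`−L_{K;ν_K}(r) + (K log K)/(K + ν_K)` converges to
`(β/(β+1)) log β + (1/(β+1)) ∫ log r dq1 − log(β + ∫ r dq0)`
for any measurable `r` bounded between positive constants. -/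
theorem anchorLoss_asymptotic
    {X : Type*} [MeasurableSpace X] (q1 q0 : Measure X)
    [IsProbabilityMeasure q1] [IsProbabilityMeasure q0]
    (h_ac : q1 ≪ q0)
    (a b : ℝ) (ha : 0 < a)
    (r : X → ℝ) (hr_meas : Measurable r)
    (hr_lb : ∀ x, a ≤ r x) (hr_ub : ∀ x, r x ≤ b)
    (β : ℝ) (hβ : 0 ≤ β)
    (ν : ℕ → ℝ) (hν : ∀ K, 0 ≤ ν K) (hν_pos : 0 < β → ∀ K, 0 < ν K)
    (h_lim : Tendsto (fun K : ℕ => ν K / (K : ℝ)) atTop (nhds β)) :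
    Tendsto
      (fun K : ℕ =>
        - anchorLossR q1 q0 K (ν K) r + ((K : ℝ) * Real.log K) / ((K : ℝ) + ν K))
      atTop
      (nhds ((β / (β + 1)) * Real.log β
        + (β + 1)⁻¹ * ∫ x, Real.log (r x) ∂q1
        - Real.log (β + ∫ x, r x ∂q0))) := by

  have hne : Nonempty X := by
    by_contra h
    have h1 : q0 Set.univ = 1 := measure_univ
    rw [Set.univ_eq_empty_iff.mpr (not_nonempty_iff.mp h)] at h1
    simp at h1
  obtain ⟨x0⟩ := hne
  have hab : a ≤ b := le_trans (hr_lb x0) (hr_ub x0)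
  set m : ℝ := ∫ x, r x ∂q0 with hm_def
  set m1 : ℝ := ∫ x, r x ∂q1 with hm1_def
  set L1 : ℝ := ∫ x, Real.log (r x) ∂q1 with hL1_def
  have hm_mem := my_mean_lb q0 ha hr_meas hr_lb hr_ub
  have hβm : 0 < β + m := by linarith [hm_mem.1]
  -- the error sequence tends to zero
  have hsqrt : Tendsto Real.sqrt atTop atTop := by
    refine (tendsto_rpow_atTop (by norm_num : (0:ℝ) < 1/2)).congr' ?_
    filter_upwards [eventually_ge_atTop (0:ℝ)] with x hx
    exact (Real.sqrt_eq_rpow x).symm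
  have hE : Tendsto (fun K : ℕ => 2 * (b - a + 1) / (a * Real.sqrt K)) atTop (nhds 0) := by
    apply Tendsto.div_atTop tendsto_const_nhds
    exact Tendsto.const_mul_atTop ha (hsqrt.comp tendsto_natCast_atTop_atTop)
  -- limit of the q0-side integral
  have hc0 : Tendsto (fun K : ℕ => Real.log (ν K / K + m)) atTop
      (nhds (Real.log (β + m))) := by
    have harg : Tendsto (fun K : ℕ => ν K / K + m) atTop (nhds (β + m)) :=
      h_lim.add tendsto_const_nhds
    exact (Real.continuousAt_log hβm.ne').tendsto.comp harg
  have hB0diff : Tendsto (fun K : ℕ =>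
      (∫ x : Fin K → X, Real.log ((ν K + ∑ i, r (x i)) / K) ∂(Measure.pi fun _ : Fin K => q0))
        - Real.log (ν K / K + m)) atTop (nhds 0) := by
    apply squeeze_zero_norm' ?_ hE
    filter_upwards [eventually_ge_atTop 1] with K hK1
    have hK : 0 < K := hK1
    have hK0 : (0:ℝ) < K := by exact_mod_cast hK
    have hcore := my_core hK (fun _ : Fin K => q0) (fun _ => inferInstance)
      ha hab hr_meas hr_lb hr_ub (ν K) (hν K)
    have hsum : (∑ _i : Fin K, ∫ y, r y ∂q0) = (K : ℝ) * m := by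
      simp [Finset.sum_const, mul_comm, ← hm_def]
    rw [hsum] at hcore
    have hcenter : Real.log ((ν K + (K : ℝ) * m) / K) = Real.log (ν K / K + m) := by
      congr 1
      field_simp
    rw [hcenter] at hcore
    simpa [Real.norm_eq_abs] using hcore
  have hB0 : Tendsto (fun K : ℕ =>
      ∫ x : Fin K → X, Real.log ((ν K + ∑ i, r (x i)) / K) ∂(Measure.pi fun _ : Fin K => q0))
      atTop (nhds (Real.log (β + m))) := by
    have h2 := hc0.add hB0diff
    simp only [add_zero] at h2
    exact h2.congr (fun K => by ring)
  -- limit of the class-measure-side integral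
  set B1 : ℕ → ℝ := fun K => if hK : 0 < K then
      ∫ x : Fin K → X, Real.log ((ν K + ∑ i, r (x i)) / K) ∂(classMeasure q1 q0 K ⟨0, hK⟩)
    else 0 with hB1_def
  have hc1 : Tendsto (fun K : ℕ => Real.log (ν K / K + (m + (m1 - m) / K))) atTop
      (nhds (Real.log (β + m))) := by
    have harg : Tendsto (fun K : ℕ => ν K / K + (m + (m1 - m) / K)) atTop
        (nhds (β + (m + 0))) :=
      h_lim.add (tendsto_const_nhds.add (tendsto_const_div_atTop_nhds_zero_nat (m1 - m)))
    rw [add_zero] at harg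
    exact (Real.continuousAt_log hβm.ne').tendsto.comp harg
  have hB1diff : Tendsto (fun K : ℕ => B1 K - Real.log (ν K / K + (m + (m1 - m) / K)))
      atTop (nhds 0) := by
    apply squeeze_zero_norm' ?_ hE
    filter_upwards [eventually_ge_atTop 1] with K hK1
    have hK : 0 < K := hK1
    have hK0 : (0:ℝ) < K := by exact_mod_cast hK
    have hP1 : ∀ i : Fin K, IsProbabilityMeasure
        ((fun i => if i = (⟨0, hK⟩ : Fin K) then q1 else q0) i) := by
      intro i
      dsimp only
      split <;> infer_instance
    have hcore := my_core hK (fun i => if i = (⟨0, hK⟩ : Fin K) then q1 else q0) hP1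
      ha hab hr_meas hr_lb hr_ub (ν K) (hν K)
    have hsum : (∑ i : Fin K, ∫ y, r y ∂((fun i => if i = (⟨0, hK⟩ : Fin K) then q1 else q0) i))
        = (K : ℝ) * m + (m1 - m) := by
      have h1 : ∀ i : Fin K, (∫ y, r y ∂(if i = (⟨0, hK⟩ : Fin K) then q1 else q0))
          = m + (if i = (⟨0, hK⟩ : Fin K) then m1 - m else 0) := by
        intro i
        split
        · rw [← hm1_def]; ring
        · rw [← hm_def]; ring
      dsimp only
      rw [Finset.sum_congr rfl (fun i _ => h1 i), Finset.sum_add_distrib, Finset.sum_const]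
      simp [mul_comm]
    rw [hsum] at hcore
    have hcenter : Real.log ((ν K + ((K : ℝ) * m + (m1 - m))) / K)
        = Real.log (ν K / K + (m + (m1 - m) / K)) := by
      congr 1
      field_simp
    rw [hcenter] at hcore
    rw [hB1_def]
    simp only [dif_pos hK]
    simpa [Real.norm_eq_abs, classMeasure] using hcore
  have hB1 : Tendsto B1 atTop (nhds (Real.log (β + m))) := by
    have h2 := hc1.add hB1diff
    simp only [add_zero] at h2
    exact h2.congr (fun K => by ring)
  -- assemble the limit
  have h1t : Tendsto (fun K : ℕ => 1 + ν K / K) atTop (nhds (1 + β)) :=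
    tendsto_const_nhds.add h_lim
  have hβ1 : (1:ℝ) + β ≠ 0 := by linarith
  have hw : Tendsto (fun K : ℕ => (1 + ν K / K)⁻¹) atTop (nhds (1 + β)⁻¹) := h1t.inv₀ hβ1
  have hnum : Tendsto (fun K : ℕ => ν K / K * Real.log (ν K / K)) atTop
      (nhds (β * Real.log β)) := by
    have h2 : Tendsto (fun K : ℕ => - Real.negMulLog (ν K / K)) atTop
        (nhds (- Real.negMulLog β)) :=
      ((Real.continuous_negMulLog.tendsto β).comp h_lim).neg
    rw [show - Real.negMulLog β = β * Real.log β by simp [Real.negMulLog]] at h2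
    exact h2.congr (fun K => by simp [Real.negMulLog])
  have hPterm : Tendsto (fun K : ℕ => (ν K / K * Real.log (ν K / K)) / (1 + ν K / K)) atTop
      (nhds ((β * Real.log β) / (1 + β))) := hnum.div h1t hβ1
  have htfrac : Tendsto (fun K : ℕ => (ν K / K) / (1 + ν K / K)) atTop
      (nhds (β / (1 + β))) := h_lim.div h1t hβ1
  have hG : Tendsto (fun K : ℕ =>
      (1 + ν K / K)⁻¹ * L1 + (ν K / K * Real.log (ν K / K)) / (1 + ν K / K)
        - (1 + ν K / K)⁻¹ * B1 K
        - ((ν K / K) / (1 + ν K / K)) *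
            (∫ x : Fin K → X, Real.log ((ν K + ∑ i, r (x i)) / K)
              ∂(Measure.pi fun _ : Fin K => q0)))
      atTop (nhds ((1 + β)⁻¹ * L1 + (β * Real.log β) / (1 + β)
        - (1 + β)⁻¹ * Real.log (β + m) - (β / (1 + β)) * Real.log (β + m))) :=
    (((hw.mul tendsto_const_nhds).add hPterm).sub (hw.mul hB1)).sub (htfrac.mul hB0)
  have hval : (1 + β)⁻¹ * L1 + (β * Real.log β) / (1 + β)
      - (1 + β)⁻¹ * Real.log (β + m) - (β / (1 + β)) * Real.log (β + m)
      = (β / (β + 1)) * Real.log β + (β + 1)⁻¹ * L1 - Real.log (β + m) := by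
    field_simp
    ring
  rw [← hval]
  apply hG.congr'
  filter_upwards [eventually_ge_atTop 1] with K hK1
  have hK : 0 < K := hK1
  have hid := my_identity q1 q0 ha hr_meas hr_lb hr_ub hK (ν K) (hν K)
  have hB1K : B1 K = ∫ x : Fin K → X, Real.log ((ν K + ∑ i, r (x i)) / K)
      ∂(classMeasure q1 q0 K ⟨0, hK⟩) := by
    rw [hB1_def]
    simp only [dif_pos hK]
  rw [hB1K]
  exact hid.symm
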